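/- arXiv:2312.03688 — 2 statements merged into one kernel-verified Lean document; each statement's English description precedes it below -/
import Mathlib

section
/- Fix 0 < ε < 0.1 and let α = (1/4)·e^{−4/ε}. For n, m with (1+ε)n ≤ m ≤ n²/8, the proportion of graphs G with vertex set [n] and exactly m edges that fail to be α-balanced tends to 0 as n → ∞. Here G is α-balanced if e(G[X]) ≤ (m/n)·|X| for every X ⊆ [n] with |X| ≤ α(n−1). -/
noncomputable section

namespace TwwPaper

open Finset

variable {V : Type*}

/-- The number of edges of `G` with both endpoints in `X`. -/
def edgesIn (G : SimpleGraph V) (X : Finset V) : ℕ :=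
  Nat.card {e : Sym2 V // e ∈ G.edgeSet ∧ ∀ v ∈ e, v ∈ X}

/-- The number of edges of `G`. -/
def edgeCount (G : SimpleGraph V) : ℕ := Nat.card G.edgeSet

/-- The maximum average degree of `G`: the maximum over nonempty vertex subsets `X`
of `2 e(G[X]) / |X|`. -/
def mad [Fintype V] (G : SimpleGraph V) : ℝ :=
  ⨆ X : {X : Finset V // X.Nonempty}, (2 * edgesIn G X.1 : ℝ) / X.1.card

/-- The degree of a vertex. -/
def deg (G : SimpleGraph V) (v : V) : ℕ := Nat.card (G.neighborSet v)

/-- The maximum degree `Δ(G)`. -/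
def maxDeg [Fintype V] (G : SimpleGraph V) : ℕ := univ.sup (deg G)

/-- `G` is `d`-regular. -/
def IsReg (G : SimpleGraph V) (d : ℕ) : Prop := ∀ v, deg G v = d

/-- `G` admits an orientation with maximum outdegree at most one:
an assignment of a tail (source) vertex to each edge, no vertex being
the tail of two distinct edges. -/
def HasOrientationOutdegLEOne (G : SimpleGraph V) : Prop :=
  ∃ f : G.edgeSet → V, (∀ e : G.edgeSet, f e ∈ (e : Sym2 V)) ∧ Function.Injective f

/-- Two lists (sequences) of the same length `r` are close if they contain a common
subsequence of length `r - 1`, obtained by deleting one entry from each. -/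
def Close {S : Type*} (L M : List S) : Prop :=
  ∃ i < L.length, ∃ j < M.length, L.eraseIdx i = M.eraseIdx j

section Partitions

variable [Fintype V] [DecidableEq V]

/-- `Q` is obtained from `P` by merging the two distinct parts `A` and `B`. -/
def IsMergeStep (P Q : Finpartition (univ : Finset V)) : Prop :=
  ∃ A ∈ P.parts, ∃ B ∈ P.parts, A ≠ B ∧
    Q.parts = insert (A ∪ B) ((P.parts.erase A).erase B)

/-- Degree of the part `A` in the quotient graph `G / P`. -/
def quotDeg (G : SimpleGraph V) (P : Finpartition (univ : Finset V)) (A : Finset V) : ℕ :=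
  Nat.card {B : Finset V // B ∈ P.parts ∧ B ≠ A ∧ ∃ u ∈ A, ∃ v ∈ B, G.Adj u v}

/-- Red degree of the part `A` with respect to the partition `P`: the number of other
parts `B` which are neither fully adjacent nor fully non-adjacent to `A`. -/
def redDeg (G : SimpleGraph V) (P : Finpartition (univ : Finset V)) (A : Finset V) : ℕ :=
  Nat.card {B : Finset V // B ∈ P.parts ∧ B ≠ A ∧ (∃ u ∈ A, ∃ v ∈ B, G.Adj u v) ∧
    ¬ (∀ u ∈ A, ∀ v ∈ B, G.Adj u v)}

/-- There is a sequence of partitions of `V(G)`, starting at the discrete partition,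
ending with at most one part, each obtained from the previous one by merging two parts,
such that every part of every intermediate partition has `degFn`-degree at most `w`. -/
def SeqOK (G : SimpleGraph V)
    (degFn : SimpleGraph V → Finpartition (univ : Finset V) → Finset V → ℕ) (w : ℕ) : Prop :=
  ∃ n : ℕ, ∃ P : Fin (n + 1) → Finpartition (univ : Finset V),
    (∀ A ∈ (P 0).parts, A.card = 1) ∧
    (P (Fin.last n)).parts.card ≤ 1 ∧
    (∀ i : Fin n, IsMergeStep (P i.castSucc) (P i.succ)) ∧
    (∀ i, ∀ A ∈ (P i).parts, degFn G (P i) A ≤ w)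

/-- The sparse twin-width of `G`: the least `w` such that `G` can be contracted to a
single vertex by iterated pairwise identifications with all intermediate (quotient)
graphs of maximum degree at most `w`. -/
def stww (G : SimpleGraph V) : ℕ := sInf {w | SeqOK G quotDeg w}

/-- The twin-width of `G`, via contraction sequences minimizing the maximum red degree. -/
def tww (G : SimpleGraph V) : ℕ := sInf {w | SeqOK G redDeg w}

/-- The quotient graph `G / P`: parts of `P` are adjacent iff some edge of `G` joins them. -/
def quotGraph (G : SimpleGraph V) (P : Finpartition (univ : Finset V)) :
    SimpleGraph {A : Finset V // A ∈ P.parts} :=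
  SimpleGraph.fromRel (fun A B => ∃ u ∈ A.1, ∃ v ∈ B.1, G.Adj u v)

end Partitions

/-- A graph is `w`-degenerate if every nonempty (induced) subgraph has a vertex of
degree at most `w` in it. -/
def Degenerate {W : Type*} (w : ℕ) (H : SimpleGraph W) : Prop :=
  ∀ s : Finset W, s.Nonempty → ∃ a ∈ s, Nat.card {b : W // b ∈ s ∧ H.Adj a b} ≤ w

/-- The graph `Π(r₁,…,r_a; b, q)`: vertices are tuples `(v₁,…,v_a)` with `vᵢ ∈ [q]^{rᵢ}`,
two tuples being adjacent iff (they are distinct and) at least `b` coordinates are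
pairwise equal or close. -/
def PiGraph (a b q : ℕ) (rfn : Fin a → ℕ) : SimpleGraph (∀ i : Fin a, Fin (rfn i) → Fin q) :=
  SimpleGraph.fromRel (fun u v => ∃ I : Finset (Fin a), I.card = b ∧
    ∀ i ∈ I, u i = v i ∨ Close (List.ofFn (u i)) (List.ofFn (v i)))

lemma choose_shift (N m : ℕ) (hm : m ≤ N) : ∀ t, t ≤ m →
    (N - m) ^ t * N.choose (m - t) ≤ m ^ t * N.choose m := by
  intro t
  induction t with
  | zero => simp
  | succ t ih =>
    intro ht
    have ht' : t ≤ m := by omega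
    have hkey : (N - m) * N.choose (m - (t + 1)) ≤ m * N.choose (m - t) := by
      have h1 : m - (t+1) + 1 = m - t := by omega
      have h2 := Nat.choose_succ_right_eq N (m - (t+1))
      rw [h1] at h2
      calc (N - m) * N.choose (m - (t+1))
          ≤ (N - (m - (t+1))) * N.choose (m - (t+1)) := by
            apply Nat.mul_le_mul_right; omega
        _ = N.choose (m - t) * (m - t) := by rw [h2]; ring
        _ ≤ m * N.choose (m - t) := by
            rw [mul_comm]; exact Nat.mul_le_mul_right _ (by omega)
    calc (N - m) ^ (t+1) * N.choose (m - (t+1))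
        = (N - m) ^ t * ((N - m) * N.choose (m - (t+1))) := by ring
      _ ≤ (N - m) ^ t * (m * N.choose (m - t)) := Nat.mul_le_mul_left _ hkey
      _ = m * ((N - m) ^ t * N.choose (m - t)) := by ring
      _ ≤ m * (m ^ t * N.choose m) := Nat.mul_le_mul_left _ (ih ht')
      _ = m ^ (t+1) * N.choose m := by ring

lemma pow_le_three_pow_mul_factorial : ∀ t : ℕ, (t : ℝ) ^ t ≤ 3 ^ t * t.factorial := by
  intro t
  induction t with
  | zero => simp
  | succ t ih =>
    rcases Nat.eq_zero_or_pos t with h | h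
    · subst h; norm_num
    have htpos : (0:ℝ) < t := by exact_mod_cast h
    have hbin : ((t:ℝ) + 1) ^ t ≤ 3 * (t:ℝ) ^ t := by
      have h1 : ((t:ℝ) + 1) = (t:ℝ) * (1 + 1 / t) := by field_simp
      have h2 : (1 + 1 / (t:ℝ)) ^ t ≤ 3 := by
        have h3 : (1 : ℝ) + 1 / t ≤ Real.exp (1 / t) := by
          have := Real.add_one_le_exp (1 / (t:ℝ)); linarith
        have h4 : (1 + 1 / (t:ℝ)) ^ t ≤ Real.exp (1 / t) ^ t := by
          apply pow_le_pow_left₀ (by positivity) h3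
        have h5 : Real.exp (1 / (t:ℝ)) ^ t = Real.exp 1 := by
          rw [← Real.exp_nat_mul]
          congr 1
          field_simp
        rw [h5] at h4
        have := Real.exp_one_lt_d9
        linarith
      calc ((t:ℝ) + 1) ^ t = (t:ℝ) ^ t * (1 + 1 / t) ^ t := by
            rw [h1, mul_pow]
        _ ≤ (t:ℝ) ^ t * 3 := by
            apply mul_le_mul_of_nonneg_left h2 (by positivity)
        _ = 3 * (t:ℝ) ^ t := by ring
    have hcast : ((t + 1 : ℕ) : ℝ) = (t:ℝ) + 1 := by push_cast; ring
    calc ((t+1 : ℕ) : ℝ) ^ (t+1) = ((t:ℝ) + 1) * ((t:ℝ)+1) ^ t := by rw [hcast]; ring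
      _ ≤ ((t:ℝ) + 1) * (3 * (t:ℝ) ^ t) := by
          apply mul_le_mul_of_nonneg_left hbin (by positivity)
      _ ≤ ((t:ℝ) + 1) * (3 * (3 ^ t * t.factorial)) := by
          apply mul_le_mul_of_nonneg_left (by apply mul_le_mul_of_nonneg_left ih (by norm_num)) (by positivity)
      _ = 3 ^ (t+1) * (((t:ℝ) + 1) * t.factorial) := by ring
      _ = 3 ^ (t+1) * (t+1).factorial := by
          rw [Nat.factorial_succ]; push_cast; ring

lemma choose_le_three_pow (n k : ℕ) :
    (n.choose k : ℝ) * k ^ k ≤ 3 ^ k * n ^ k := by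
  have h1 : (n.choose k : ℝ) ≤ (n:ℝ) ^ k / k.factorial := by
    have := Nat.choose_le_pow_div (α := ℝ) k n
    simpa using this
  have h2 := pow_le_three_pow_mul_factorial k
  have hfac : (0:ℝ) < k.factorial := by exact_mod_cast Nat.factorial_pos k
  calc (n.choose k : ℝ) * k ^ k ≤ ((n:ℝ) ^ k / k.factorial) * (3 ^ k * k.factorial) := by
        apply mul_le_mul h1 h2 (by positivity) (by positivity)
    _ = 3 ^ k * n ^ k := by field_simp

open scoped Classical in
/-- total count of graphs with m edges -/
lemma card_graphs (n m : ℕ) :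
    Nat.card {G : SimpleGraph (Fin n) // edgeCount G = m} = (n.choose 2).choose m := by
  classical
  set allE : Finset (Sym2 (Fin n)) := univ.filter (fun e => ¬ e.IsDiag) with hallE
  have hcardallE : allE.card = n.choose 2 := by
    rw [hallE, ← Fintype.card_subtype]
    rw [Sym2.card_subtype_not_diag, Fintype.card_fin]
  have hedgeCount : ∀ G : SimpleGraph (Fin n), edgeCount G = G.edgeFinset.card := by
    intro G
    rw [edgeCount, Nat.card_eq_fintype_card, SimpleGraph.edgeFinset, Set.toFinset_card]
  rw [Nat.card_eq_fintype_card, Fintype.card_subtype]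
  rw [← hcardallE, ← Finset.card_powersetCard]
  apply Finset.card_bij (fun G _ => G.edgeFinset)
  · intro G hG
    simp only [Finset.mem_filter, Finset.mem_univ, true_and] at hG
    rw [Finset.mem_powersetCard]
    constructor
    · intro e he
      simp only [hallE, Finset.mem_filter, Finset.mem_univ, true_and]
      exact G.not_isDiag_of_mem_edgeSet (by simpa using he)
    · rw [← hedgeCount]; exact hG
  · intro G₁ h₁ G₂ h₂ h
    exact SimpleGraph.edgeFinset_inj.mp h
  · intro s hs
    rw [Finset.mem_powersetCard] at hs
    refine ⟨SimpleGraph.fromEdgeSet ↑s, ?_, ?_⟩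
    · have hES : (SimpleGraph.fromEdgeSet (↑s : Set (Sym2 (Fin n)))).edgeSet = ↑s := by
        rw [SimpleGraph.edgeSet_fromEdgeSet]
        ext e
        simp only [Set.mem_diff, Set.mem_setOf_eq, Finset.mem_coe, and_iff_left_iff_imp]
        intro he
        have := hs.1 he
        simp only [hallE, Finset.mem_filter] at this
        exact this.2
      simp only [Finset.mem_filter, Finset.mem_univ, true_and]
      rw [edgeCount, hES, Nat.card_eq_fintype_card, ← hs.2]
      simp
    · have hES : (SimpleGraph.fromEdgeSet (↑s : Set (Sym2 (Fin n)))).edgeSet = ↑s := by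
        rw [SimpleGraph.edgeSet_fromEdgeSet]
        ext e
        simp only [Set.mem_diff, Set.mem_setOf_eq, Finset.mem_coe, and_iff_left_iff_imp]
        intro he
        have := hs.1 he
        simp only [hallE, Finset.mem_filter] at this
        exact this.2
      rw [SimpleGraph.edgeFinset]
      apply Finset.coe_injective
      rw [Set.coe_toFinset, hES]


open scoped Classical in
lemma edgesIn_eq_card_filter {n : ℕ} (G : SimpleGraph (Fin n)) (X : Finset (Fin n)) :
    edgesIn G X = (G.edgeFinset.filter (fun e => ∀ v ∈ e, v ∈ X)).card := by
  classical
  rw [edgesIn, Nat.card_eq_fintype_card, Fintype.card_subtype]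
  congr 1
  ext e
  simp [SimpleGraph.mem_edgeFinset, and_assoc]

open scoped Classical in
lemma card_insideAll {n : ℕ} (X : Finset (Fin n)) :
    (univ.filter (fun e : Sym2 (Fin n) => ¬ e.IsDiag ∧ ∀ v ∈ e, v ∈ X)).card
      = X.card.choose 2 := by
  classical
  have h1 : X.card.choose 2 = (univ.filter (fun z : Sym2 {x // x ∈ X} => ¬ z.IsDiag)).card := by
    rw [← Fintype.card_subtype, Sym2.card_subtype_not_diag, Fintype.card_coe]
  rw [h1]
  symm
  apply Finset.card_bij (fun z _ => Sym2.map Subtype.val z)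
  · intro z hz
    simp only [Finset.mem_filter, Finset.mem_univ, true_and] at hz ⊢
    induction z with
    | _ a b =>
      rw [Sym2.map_pair_eq]
      constructor
      · rw [Sym2.mk_isDiag_iff] at hz ⊢
        intro h; exact hz (Subtype.ext h)
      · intro v hv
        rw [Sym2.mem_iff] at hv
        rcases hv with rfl | rfl
        · exact a.2
        · exact b.2
  · intro z₁ _ z₂ _ h
    exact Sym2.map.injective Subtype.val_injective h
  · intro e he
    simp only [Finset.mem_filter, Finset.mem_univ, true_and] at he
    induction e with
    | _ a b =>
      have ha : a ∈ X := he.2 a (by rw [Sym2.mem_iff]; left; rfl)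
      have hb : b ∈ X := he.2 b (by rw [Sym2.mem_iff]; right; rfl)
      refine ⟨s(⟨a, ha⟩, ⟨b, hb⟩), ?_, ?_⟩
      · simp only [Finset.mem_filter, Finset.mem_univ, true_and, Sym2.mk_isDiag_iff]
        intro h
        apply he.1
        rw [Sym2.mk_isDiag_iff]
        exact congrArg Subtype.val h
      · rw [Sym2.map_pair_eq]

open scoped Classical in
lemma badX_card_bound {n : ℕ} (m t : ℕ) (X : Finset (Fin n)) :
    (univ.filter (fun G : SimpleGraph (Fin n) =>
        edgeCount G = m ∧ t ≤ edgesIn G X)).card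
      ≤ (X.card.choose 2).choose t * (n.choose 2).choose (m - t) := by
  classical
  set insideAll : Finset (Sym2 (Fin n)) :=
    univ.filter (fun e => ¬ e.IsDiag ∧ ∀ v ∈ e, v ∈ X) with hIA
  set allE : Finset (Sym2 (Fin n)) := univ.filter (fun e => ¬ e.IsDiag) with hallE
  have hcardallE : allE.card = n.choose 2 := by
    rw [hallE, ← Fintype.card_subtype, Sym2.card_subtype_not_diag, Fintype.card_fin]
  set T : Finset (Finset (Sym2 (Fin n)) × Finset (Sym2 (Fin n))) :=
    (insideAll.powersetCard t) ×ˢ (allE.powersetCard (m - t)) with hT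
  have hTcard : T.card = (X.card.choose 2).choose t * (n.choose 2).choose (m - t) := by
    rw [hT, Finset.card_product, Finset.card_powersetCard, Finset.card_powersetCard,
      card_insideAll, hcardallE]
  rw [← hTcard]
  set inside : SimpleGraph (Fin n) → Finset (Sym2 (Fin n)) :=
    fun G => G.edgeFinset.filter (fun e => ∀ v ∈ e, v ∈ X) with hinside
  set f : SimpleGraph (Fin n) → Finset (Sym2 (Fin n)) × Finset (Sym2 (Fin n)) :=
    fun G => if h : t ≤ (inside G).card then
        ((Finset.exists_subset_card_eq h).choose,
          G.edgeFinset \ (Finset.exists_subset_card_eq h).choose)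
      else (∅, ∅) with hf
  apply Finset.card_le_card_of_injOn f
  · intro G hG
    simp only [Finset.coe_filter, Set.mem_setOf_eq, Finset.mem_univ, true_and] at hG
    have hle : t ≤ (inside G).card := by
      rw [hinside]
      rw [edgesIn_eq_card_filter] at hG
      exact hG.2
    have hspec := (Finset.exists_subset_card_eq hle).choose_spec
    rw [hf]
    simp only [dif_pos hle]
    rw [Finset.mem_coe, hT, Finset.mem_product]
    constructor
    · rw [Finset.mem_powersetCard]
      refine ⟨?_, hspec.2⟩
      intro e he
      have he' := hspec.1 he
      rw [hinside, Finset.mem_filter, SimpleGraph.mem_edgeFinset] at he'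
      rw [hIA, Finset.mem_filter]
      exact ⟨Finset.mem_univ _, G.not_isDiag_of_mem_edgeSet he'.1, he'.2⟩
    · rw [Finset.mem_powersetCard]
      constructor
      · intro e he
        rw [Finset.mem_sdiff, SimpleGraph.mem_edgeFinset] at he
        rw [hallE, Finset.mem_filter]
        exact ⟨Finset.mem_univ _, G.not_isDiag_of_mem_edgeSet he.1⟩
      · have hsub : (Finset.exists_subset_card_eq hle).choose ⊆ G.edgeFinset := by
          intro e he
          have := hspec.1 he
          rw [hinside, Finset.mem_filter] at this
          exact this.1
        rw [Finset.card_sdiff_of_subset hsub, hspec.2]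
        congr 1
        rw [← hG.1, edgeCount, Nat.card_eq_fintype_card, SimpleGraph.edgeFinset,
          Set.toFinset_card]
  · intro G₁ hG₁ G₂ hG₂ heq
    simp only [Finset.coe_filter, Set.mem_setOf_eq, Finset.mem_univ, true_and] at hG₁ hG₂
    have hle₁ : t ≤ (inside G₁).card := by
      rw [hinside]; rw [edgesIn_eq_card_filter] at hG₁; exact hG₁.2
    have hle₂ : t ≤ (inside G₂).card := by
      rw [hinside]; rw [edgesIn_eq_card_filter] at hG₂; exact hG₂.2
    have hspec₁ := (Finset.exists_subset_card_eq hle₁).choose_spec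
    have hspec₂ := (Finset.exists_subset_card_eq hle₂).choose_spec
    rw [hf] at heq
    simp only [dif_pos hle₁, dif_pos hle₂, Prod.mk.injEq] at heq
    have hsub₁ : (Finset.exists_subset_card_eq hle₁).choose ⊆ G₁.edgeFinset := by
      intro e he
      have := hspec₁.1 he
      rw [hinside, Finset.mem_filter] at this
      exact this.1
    have hsub₂ : (Finset.exists_subset_card_eq hle₂).choose ⊆ G₂.edgeFinset := by
      intro e he
      have := hspec₂.1 he
      rw [hinside, Finset.mem_filter] at this
      exact this.1
    obtain ⟨e1, e2⟩ := heq
    rw [e1] at hsub₁ e2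
    have hE : G₁.edgeFinset = G₂.edgeFinset := by
      rw [← Finset.union_sdiff_of_subset hsub₁, ← Finset.union_sdiff_of_subset hsub₂, e2]
    exact SimpleGraph.edgeFinset_inj.mp hE

lemma rpow_tenth_le {a c : ℝ} (ha : 1 ≤ a) (hc : 0 ≤ c) (h : a ≤ c ^ (10:ℕ)) :
    a ^ ((0.1:ℝ)) ≤ c := by
  have h0 : (0:ℝ) ≤ a := by linarith
  have key : (a ^ ((0.1:ℝ))) ^ (10:ℕ) = a := by
    rw [← Real.rpow_natCast (a ^ ((0.1:ℝ))) 10, ← Real.rpow_mul h0]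
    norm_num
  have h2 : (a ^ ((0.1:ℝ))) ^ (10:ℕ) ≤ c ^ (10:ℕ) := by rw [key]; exact h
  exact (pow_le_pow_iff_left₀ (Real.rpow_nonneg h0 _) hc (by norm_num)).mp h2

lemma exp_neg_four_le : Real.exp (-4) ≤ 1 / 54 := by
  have h4 : (54:ℝ) ≤ Real.exp 4 := by
    have h1 : Real.exp 1 ^ (4:ℕ) = Real.exp 4 := by
      rw [Real.exp_one_pow]; norm_num
    have h2 : (2.7182818283:ℝ) ^ (4:ℕ) ≤ Real.exp 1 ^ (4:ℕ) :=
      pow_le_pow_left₀ (by norm_num) Real.exp_one_gt_d9.le 4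
    have : (54:ℝ) ≤ (2.7182818283:ℝ) ^ (4:ℕ) := by norm_num
    linarith
  rw [show (-4:ℝ) = -(4:ℝ) by norm_num, Real.exp_neg]
  rw [div_eq_inv_mul, mul_one]
  exact inv_anti₀ (by norm_num) h4

set_option maxHeartbeats 1600000 in
lemma key_estimate (ε : ℝ) (hε0 : 0 < ε) (hε1 : ε < 0.1) (n m i t : ℕ)
    (hn : 100 ≤ n) (hm1 : (1 + ε) * n ≤ m) (hm2 : (m:ℝ) ≤ (n:ℝ) ^ 2 / 8)
    (hi1 : 1 ≤ i) (hi2 : (i:ℝ) ≤ Real.exp (-(4 / ε)) / 4 * ((n:ℝ) - 1))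
    (ht : t = ⌊(m:ℝ) / n * i⌋₊ + 1) :
    (n.choose i : ℝ) * ((i.choose 2).choose t : ℝ) * ((n.choose 2).choose (m - t) : ℝ)
      ≤ 16 * i * (0.27:ℝ) ^ (i - 1) * (n:ℝ) ^ (-ε) * ((n.choose 2).choose m : ℝ) := by
  have hn0 : (0:ℝ) < n := by
    have : (0:ℕ) < n := by omega
    exact_mod_cast this
  have hi0 : (0:ℝ) < i := by
    have : (0:ℕ) < i := hi1
    exact_mod_cast this
  have hi1' : (1:ℝ) ≤ i := by exact_mod_cast hi1
  have hm0 : (0:ℝ) < m := by nlinarith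
  set α : ℝ := Real.exp (-(4 / ε)) / 4 with hα
  have hα0 : 0 < α := by positivity
  have hα164 : α ≤ 1 / 164 := by
    have h40 : (40:ℝ) ≤ 4 / ε := by
      rw [le_div_iff₀ hε0]; nlinarith
    have h1 : Real.exp (-(4 / ε)) ≤ Real.exp (-40) := by
      apply Real.exp_le_exp.mpr; linarith
    have h2 : Real.exp (-40) ≤ 1 / 41 := by
      rw [Real.exp_neg]
      have h3 : (41:ℝ) ≤ Real.exp 40 := by
        have := Real.add_one_le_exp (40:ℝ); linarith
      rw [div_eq_inv_mul, mul_one]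
      exact inv_anti₀ (by norm_num) h3
    rw [hα]; linarith
  have hin : (i:ℝ) / n ≤ α := by
    rw [div_le_iff₀ hn0]
    calc (i:ℝ) ≤ α * ((n:ℝ) - 1) := hi2
      _ ≤ α * n := by nlinarith
  have hiln : (i:ℝ) < n := by
    have : (i:ℝ) / n ≤ 1/164 := hin.trans hα164
    rw [div_le_iff₀ hn0] at this
    nlinarith
  set N : ℕ := n.choose 2 with hN
  have hNcast : (N:ℝ) = n * ((n:ℝ) - 1) / 2 := Nat.cast_choose_two ℝ n
  have hmN : (m:ℝ) ≤ N := by rw [hNcast]; nlinarith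
  have hmNnat : m ≤ N := by exact_mod_cast hmN
  have hNm3 : (n:ℝ) ^ 2 / 3 ≤ (N:ℝ) - m := by rw [hNcast]; nlinarith
  have hNmpos : (0:ℝ) < (N:ℝ) - m := by nlinarith
  have ht1 : (m:ℝ) / n * i < t := by
    rw [ht]; push_cast; exact Nat.lt_floor_add_one _
  have htpos : 0 < t := by omega
  have htr0 : (0:ℝ) < t := by exact_mod_cast htpos
  have hmn1 : (1:ℝ) + ε ≤ (m:ℝ) / n := by rw [le_div_iff₀ hn0]; linarith
  have ht_ge : (1 + ε) * i ≤ (t:ℝ) := by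
    have : (1 + ε) * i ≤ (m:ℝ) / n * i := by
      apply mul_le_mul_of_nonneg_right hmn1 hi0.le
    linarith
  have htm : t ≤ m := by
    rw [ht]
    have hfl : ⌊(m:ℝ) / n * i⌋₊ < m := by
      rw [Nat.floor_lt (by positivity)]
      calc (m:ℝ) / n * i < (m:ℝ) / n * n := by
            apply mul_lt_mul_of_pos_left hiln (by positivity)
        _ = m := by field_simp
    omega
  have hti : (m:ℝ) / n * i ≤ (t:ℝ) := ht1.le
  -- the three choose bounds
  set K : ℕ := i.choose 2 with hK
  have h2 : (K.choose t : ℝ) ≤ (3 * K / t) ^ t := by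
    have hb := choose_le_three_pow K t
    rw [div_pow, mul_pow]
    rw [le_div_iff₀ (by positivity)]
    calc (K.choose t : ℝ) * (t:ℝ) ^ t ≤ 3 ^ t * (K:ℝ) ^ t := hb
      _ = (3:ℝ) ^ t * (K:ℝ) ^ t := by norm_num
  have h3 : (n.choose i : ℝ) ≤ (3 * n / i) ^ i := by
    have hb := choose_le_three_pow n i
    rw [div_pow, mul_pow]
    rw [le_div_iff₀ (by positivity)]
    exact hb
  have h1 : ((N.choose (m - t)) : ℝ) ≤ ((m:ℝ) / ((N:ℝ) - m)) ^ t * (N.choose m : ℝ) := by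
    have hb := choose_shift N m hmNnat t htm
    have hbr : (((N - m : ℕ)) : ℝ) ^ t * (N.choose (m - t) : ℝ)
        ≤ (m:ℝ) ^ t * (N.choose m : ℝ) := by exact_mod_cast hb
    rw [Nat.cast_sub hmNnat] at hbr
    rw [div_pow, div_mul_eq_mul_div, le_div_iff₀ (pow_pos hNmpos t)]
    calc (N.choose (m - t) : ℝ) * ((N:ℝ) - m) ^ t
        = ((N:ℝ) - m) ^ t * (N.choose (m - t) : ℝ) := by ring
      _ ≤ (m:ℝ) ^ t * (N.choose m : ℝ) := hbr
  -- the base bound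
  set b : ℝ := 9 / 2 * ((i:ℝ) / n) with hb
  have hb0 : 0 < b := by rw [hb]; positivity
  have hb45α : b ≤ 9 / 2 * α := by
    rw [hb]; nlinarith
  have hb1 : b ≤ 1 := by
    calc b ≤ 9 / 2 * α := hb45α
      _ ≤ 9 / 2 * (1/164) := by nlinarith
      _ ≤ 1 := by norm_num
  have hKle : (K:ℝ) ≤ (i:ℝ)^2 / 2 := by
    rw [hK, Nat.cast_choose_two ℝ]; nlinarith
  have hbK : 3 * (K:ℝ) / t * ((m:ℝ) / ((N:ℝ) - m)) ≤ b := by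
    have heq : 3 * (K:ℝ) / t * ((m:ℝ) / ((N:ℝ) - m))
        = 3 * (K:ℝ) * m / ((t:ℝ) * ((N:ℝ) - m)) := by
      field_simp
    rw [heq]
    have hnum : 3 * (K:ℝ) * m ≤ 3 * ((i:ℝ)^2/2) * m := by nlinarith
    have hden : ((m:ℝ) / n * i) * ((n:ℝ)^2/3) ≤ (t:ℝ) * ((N:ℝ) - m) := by
      apply mul_le_mul hti hNm3 (by positivity) htr0.le
    have hden0 : (0:ℝ) < ((m:ℝ) / n * i) * ((n:ℝ)^2/3) := by positivity
    calc 3 * (K:ℝ) * m / ((t:ℝ) * ((N:ℝ) - m))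
        ≤ (3 * ((i:ℝ)^2/2) * m) / (((m:ℝ) / n * i) * ((n:ℝ)^2/3)) := by
          apply div_le_div₀ (by positivity) hnum hden0 hden
      _ = b := by rw [hb]; field_simp; ring
  -- assemble product
  have hA : (n.choose i : ℝ) * (K.choose t : ℝ) * (N.choose (m - t) : ℝ)
      ≤ (3 * n / i) ^ i * b ^ t * (N.choose m : ℝ) := by
    calc (n.choose i : ℝ) * (K.choose t : ℝ) * (N.choose (m - t) : ℝ)
        ≤ (3 * n / i) ^ i * ((3 * K / t) ^ t) * (((m:ℝ) / ((N:ℝ) - m)) ^ t * (N.choose m : ℝ)) := by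
          apply mul_le_mul
          · apply mul_le_mul h3 h2 (by positivity) (by positivity)
          · exact h1
          · positivity
          · positivity
      _ = (3 * n / i) ^ i * ((3 * (K:ℝ) / t) * ((m:ℝ) / ((N:ℝ) - m))) ^ t * (N.choose m : ℝ) := by
          rw [mul_pow]; ring
      _ ≤ (3 * n / i) ^ i * b ^ t * (N.choose m : ℝ) := by
          apply mul_le_mul_of_nonneg_right _ (by positivity)
          apply mul_le_mul_of_nonneg_left _ (by positivity)
          apply pow_le_pow_left₀ (by positivity) hbK
  -- switch to rpow
  have hbt : b ^ t ≤ b ^ ((1 + ε) * (i:ℝ)) := by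
    rw [← Real.rpow_natCast b t]
    exact Real.rpow_le_rpow_of_exponent_ge hb0 hb1 ht_ge
  set brk : ℝ := 27 / 2 * b ^ (ε:ℝ) with hbrk
  have hbrk0 : 0 ≤ brk := by rw [hbrk]; positivity
  have hcollect : (3 * (n:ℝ) / i) ^ i * b ^ ((1 + ε) * (i:ℝ)) = brk ^ i := by
    have e1 : b ^ ((1 + ε) * (i:ℝ)) = (b ^ ((1:ℝ) + ε)) ^ i := by
      rw [← Real.rpow_natCast (b ^ ((1:ℝ) + ε)) i, ← Real.rpow_mul hb0.le]
    rw [e1, ← mul_pow]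
    congr 1
    rw [Real.rpow_add hb0, Real.rpow_one, hbrk, hb]
    field_simp
    ring
  -- bound brk two ways
  have hbε : b ^ (ε:ℝ) ≤ (9/8 : ℝ) ^ (ε:ℝ) * Real.exp (-4) := by
    have e2 : b ^ (ε:ℝ) ≤ (9 / 2 * α) ^ (ε:ℝ) :=
      Real.rpow_le_rpow hb0.le hb45α hε0.le
    have e3 : (9 / 2 * α : ℝ) = 9/8 * Real.exp (-(4/ε)) := by
      rw [hα]; ring
    have e4 : ((9/8 : ℝ) * Real.exp (-(4/ε))) ^ (ε:ℝ)
        = (9/8:ℝ) ^ (ε:ℝ) * Real.exp (-4) := by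
      rw [Real.mul_rpow (by norm_num) (Real.exp_pos _).le]
      congr 1
      rw [← Real.exp_mul]
      congr 1
      field_simp
    rw [e3, e4] at e2
    exact e2
  have h98 : ((9:ℝ)/8) ^ (ε:ℝ) ≤ 1.05 := by
    calc ((9:ℝ)/8) ^ (ε:ℝ) ≤ ((9:ℝ)/8) ^ ((0.1:ℝ)) := by
          apply Real.rpow_le_rpow_of_exponent_le (by norm_num) hε1.le
      _ ≤ 1.05 := by
          apply rpow_tenth_le (by norm_num) (by norm_num)
          norm_num
  have hbrk27 : brk ≤ 0.27 := by
    have : b ^ (ε:ℝ) ≤ 1.05 * (1/54) := by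
      calc b ^ (ε:ℝ) ≤ (9/8 : ℝ) ^ (ε:ℝ) * Real.exp (-4) := hbε
        _ ≤ 1.05 * (1/54) := by
            apply mul_le_mul h98 exp_neg_four_le (Real.exp_pos _).le (by norm_num)
    rw [hbrk]; nlinarith
  have hbrk16 : brk ≤ 16 * i * (n:ℝ) ^ (-ε) := by
    have e5 : b ^ (ε:ℝ) = (9/2:ℝ) ^ (ε:ℝ) * ((i:ℝ)/n) ^ (ε:ℝ) := by
      rw [hb, Real.mul_rpow (by norm_num) (by positivity)]
    have h92 : ((9:ℝ)/2) ^ (ε:ℝ) ≤ 1.17 := by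
      calc ((9:ℝ)/2) ^ (ε:ℝ) ≤ ((9:ℝ)/2) ^ ((0.1:ℝ)) := by
            apply Real.rpow_le_rpow_of_exponent_le (by norm_num) hε1.le
        _ ≤ 1.17 := by
            apply rpow_tenth_le (by norm_num) (by norm_num)
            norm_num
    have hiε : ((i:ℝ)/n) ^ (ε:ℝ) ≤ (i:ℝ) * (n:ℝ) ^ (-ε) := by
      rw [Real.div_rpow hi0.le hn0.le, Real.rpow_neg hn0.le]
      rw [div_eq_mul_inv]
      apply mul_le_mul_of_nonneg_right _ (by positivity)
      calc (i:ℝ) ^ (ε:ℝ) ≤ (i:ℝ) ^ ((1:ℝ)) := by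
            apply Real.rpow_le_rpow_of_exponent_le hi1' (by linarith)
        _ = i := Real.rpow_one _
    calc brk = 27/2 * ((9/2:ℝ) ^ (ε:ℝ) * ((i:ℝ)/n) ^ (ε:ℝ)) := by rw [hbrk, e5]
      _ ≤ 27/2 * (1.17 * ((i:ℝ) * (n:ℝ) ^ (-ε))) := by
          apply mul_le_mul_of_nonneg_left _ (by norm_num)
          apply mul_le_mul h92 hiε (by positivity) (by norm_num)
      _ ≤ 16 * i * (n:ℝ) ^ (-ε) := by
          have hnε : (0:ℝ) ≤ (n:ℝ) ^ (-ε) := by positivity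
          nlinarith
  -- final assembly
  have hfin : brk ^ i ≤ 0.27 ^ (i - 1) * (16 * i * (n:ℝ) ^ (-ε)) := by
    have hi' : i = (i - 1) + 1 := by omega
    calc brk ^ i = brk ^ (i - 1) * brk := by conv_lhs => rw [hi', pow_succ]
      _ ≤ 0.27 ^ (i - 1) * (16 * i * (n:ℝ) ^ (-ε)) := by
          apply mul_le_mul (pow_le_pow_left₀ hbrk0 hbrk27 _) hbrk16 hbrk0 (by positivity)
  calc (n.choose i : ℝ) * (K.choose t : ℝ) * (N.choose (m - t) : ℝ)
      ≤ (3 * n / i) ^ i * b ^ t * (N.choose m : ℝ) := hA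
    _ ≤ (3 * n / i) ^ i * b ^ ((1 + ε) * (i:ℝ)) * (N.choose m : ℝ) := by
        apply mul_le_mul_of_nonneg_right _ (by positivity)
        apply mul_le_mul_of_nonneg_left hbt (by positivity)
    _ = brk ^ i * (N.choose m : ℝ) := by rw [hcollect]
    _ ≤ (0.27 ^ (i - 1) * (16 * i * (n:ℝ) ^ (-ε))) * (N.choose m : ℝ) := by
        apply mul_le_mul_of_nonneg_right hfin (by positivity)
    _ = 16 * i * (0.27:ℝ) ^ (i - 1) * (n:ℝ) ^ (-ε) * (N.choose m : ℝ) := by ring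

set_option maxHeartbeats 2000000 in
theorem statement_10 (ε : ℝ) (hε0 : 0 < ε) (hε1 : ε < 0.1) :
    ∀ δ : ℝ, 0 < δ → ∃ N : ℕ, ∀ n : ℕ, N ≤ n → ∀ m : ℕ,
      (1 + ε) * n ≤ m → (m : ℝ) ≤ (n : ℝ) ^ 2 / 8 →
      (Nat.card {G : SimpleGraph (Fin n) // edgeCount G = m ∧
          ¬ (∀ X : Finset (Fin n), (X.card : ℝ) ≤ Real.exp (-(4 / ε)) / 4 * ((n : ℝ) - 1) →
              (edgesIn G X : ℝ) ≤ (m : ℝ) / n * X.card)} : ℝ) ≤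
        δ * Nat.card {G : SimpleGraph (Fin n) // edgeCount G = m} := by
  intro δ hδ
  -- choose the threshold N₀
  obtain ⟨N₀, hN₀⟩ : ∃ N₀ : ℕ, ∀ n : ℕ, N₀ ≤ n → 130 * (n:ℝ) ^ (-ε) ≤ δ := by
    set x : ℝ := (130 / δ) ^ (1 / ε) with hx
    have hx0 : 0 ≤ x := by rw [hx]; positivity
    refine ⟨⌈x⌉₊ + 1, fun n hn => ?_⟩
    have hxn : x ≤ (n:ℝ) := by
      calc x ≤ ⌈x⌉₊ := Nat.le_ceil x
        _ ≤ (n:ℝ) := by exact_mod_cast Nat.le_of_succ_le hn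
    have hn0 : (0:ℝ) < n := lt_of_lt_of_le (by positivity : (0:ℝ) < (⌈x⌉₊ + 1 : ℕ)) (by exact_mod_cast hn)
    have hxe : x ^ ε = 130 / δ := by
      rw [hx, ← Real.rpow_mul (by positivity), one_div_mul_cancel hε0.ne', Real.rpow_one]
    have h1 : 130 / δ ≤ (n:ℝ) ^ ε := by
      rw [← hxe]
      exact Real.rpow_le_rpow hx0 hxn hε0.le
    have h2 : (0:ℝ) < 130 / δ := by positivity
    have h3 : (n:ℝ) ^ (-ε) ≤ δ / 130 := by
      rw [Real.rpow_neg hn0.le]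
      rw [inv_le_iff_one_le_mul₀ (lt_of_lt_of_le h2 h1)]
      calc (1:ℝ) = (130/δ) * (δ/130) := by field_simp
        _ ≤ (n:ℝ) ^ ε * (δ/130) := by
            apply mul_le_mul_of_nonneg_right h1 (by positivity)
        _ = δ / 130 * (n:ℝ) ^ ε := by ring
    linarith
  refine ⟨max 100 N₀, fun n hn m hm1 hm2 => ?_⟩
  classical
  have hn100 : 100 ≤ n := le_trans (le_max_left _ _) hn
  have hnN₀ : N₀ ≤ n := le_trans (le_max_right _ _) hn
  have hn0 : (0:ℝ) < n := by
    have : (0:ℕ) < n := by omega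
    exact_mod_cast this
  set α : ℝ := Real.exp (-(4 / ε)) / 4 with hα
  set C : ℕ := (n.choose 2).choose m with hC
  have hC0 : (0:ℝ) ≤ C := by positivity
  -- rewrite the two Nat.cards
  rw [card_graphs n m]
  set P : SimpleGraph (Fin n) → Prop := fun G => edgeCount G = m ∧
      ¬ (∀ X : Finset (Fin n), (X.card : ℝ) ≤ α * ((n : ℝ) - 1) →
          (edgesIn G X : ℝ) ≤ (m : ℝ) / n * X.card) with hP
  have hbadcard : Nat.card {G : SimpleGraph (Fin n) // P G} = (univ.filter P).card := by
    rw [Nat.card_eq_fintype_card, Fintype.card_subtype]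
  rw [hbadcard]
  -- the per-set data
  set tf : ℕ → ℕ := fun k => ⌊(m:ℝ) / n * k⌋₊ + 1 with htf
  set g : ℕ → ℕ := fun k => ((k.choose 2).choose (tf k)) * ((n.choose 2).choose (m - tf k)) with hg
  set g' : ℕ → ℕ := fun k => if (k:ℝ) ≤ α * ((n:ℝ) - 1) then g k else 0 with hg'
  set badX : Finset (Fin n) → Finset (SimpleGraph (Fin n)) := fun X =>
    univ.filter (fun G => edgeCount G = m ∧ tf X.card ≤ edgesIn G X) with hbadX
  set 𝒳 : Finset (Finset (Fin n)) :=
    univ.powerset.filter (fun X => (X.card:ℝ) ≤ α * ((n:ℝ) - 1)) with h𝒳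
  -- union bound
  have hsub : (univ.filter P) ⊆ 𝒳.biUnion badX := by
    intro G hG
    rw [Finset.mem_filter] at hG
    have hGm := hG.2.1
    have hGbad := hG.2.2
    push_neg at hGbad
    obtain ⟨X, hX1, hX2⟩ := hGbad
    rw [Finset.mem_biUnion]
    refine ⟨X, ?_, ?_⟩
    · rw [h𝒳, Finset.mem_filter, Finset.mem_powerset]
      exact ⟨Finset.subset_univ _, hX1⟩
    · rw [hbadX, Finset.mem_filter]
      refine ⟨Finset.mem_univ _, hGm, ?_⟩
      have h' : ⌊(m:ℝ) / n * X.card⌋₊ < edgesIn G X := by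
        rw [Nat.floor_lt (by positivity)]
        exact hX2
      show ⌊(m:ℝ) / n * X.card⌋₊ + 1 ≤ edgesIn G X
      omega
  have hstep2 : (univ.filter P).card ≤ ∑ X ∈ 𝒳, (badX X).card :=
    le_trans (Finset.card_le_card hsub) (Finset.card_biUnion_le)
  have hstep3 : ∑ X ∈ 𝒳, (badX X).card ≤ ∑ X ∈ 𝒳, g X.card := by
    apply Finset.sum_le_sum
    intro X _
    rw [hbadX, hg]
    exact badX_card_bound m (tf X.card) X
  have hstep4 : ∑ X ∈ 𝒳, g X.card = ∑ X ∈ (univ : Finset (Fin n)).powerset, g' X.card := by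
    rw [h𝒳, Finset.sum_filter]
  have hstep5 : ∑ X ∈ (univ : Finset (Fin n)).powerset, g' X.card
      = ∑ j ∈ Finset.range (n + 1), n.choose j * g' j := by
    rw [Finset.sum_powerset_apply_card]
    simp [Finset.card_univ, smul_eq_mul]
  have hnat : (univ.filter P).card ≤ ∑ j ∈ Finset.range (n + 1), n.choose j * g' j := by
    calc (univ.filter P).card ≤ ∑ X ∈ 𝒳, (badX X).card := hstep2
      _ ≤ ∑ X ∈ 𝒳, g X.card := hstep3
      _ = ∑ j ∈ Finset.range (n + 1), n.choose j * g' j := by rw [hstep4, hstep5]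
  -- cast to the reals
  have hcast : ((univ.filter P).card : ℝ)
      ≤ ∑ j ∈ Finset.range (n + 1), ((n.choose j * g' j : ℕ) : ℝ) := by
    exact_mod_cast hnat
  -- per-term real bound
  have hterm : ∀ j ∈ Finset.range (n + 1), ((n.choose j * g' j : ℕ) : ℝ)
      ≤ 16 * j * (0.27:ℝ) ^ (j - 1) * (n:ℝ) ^ (-ε) * ((n.choose 2).choose m : ℝ) := by
    intro j _
    rcases Nat.eq_zero_or_pos j with rfl | hj1
    · have htf0 : 0 < tf 0 := Nat.succ_pos _
      have hg0 : g 0 = 0 := by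
        simp only [hg]
        have h00 : (Nat.choose 0 2) = 0 := by norm_num
        rw [h00, Nat.choose_eq_zero_of_lt htf0, zero_mul]
      have hg'0 : g' 0 = 0 := by
        simp only [hg', hg0]; simp
      simp [hg'0]
    · by_cases hij : (j:ℝ) ≤ α * ((n:ℝ) - 1)
      · have hg'j : g' j = g j := by simp only [hg']; exact if_pos hij
        rw [hα] at hij
        have hkey := key_estimate ε hε0 hε1 n m j (tf j) hn100 hm1 hm2 hj1 hij (by simp only [htf])
        rw [hg'j]
        simp only [hg]
        push_cast
        rw [← mul_assoc]
        exact hkey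
      · have hg'j : g' j = 0 := by simp only [hg']; exact if_neg hij
        rw [hg'j, mul_zero, Nat.cast_zero]
        positivity
  -- sum the geometric series
  have hsum2 : ∑ j ∈ Finset.range (n + 1),
        16 * (j:ℝ) * (0.27:ℝ) ^ (j - 1) * (n:ℝ) ^ (-ε) * ((n.choose 2).choose m : ℝ)
      ≤ 130 * (n:ℝ) ^ (-ε) * ((n.choose 2).choose m : ℝ) := by
    set X : ℝ := (n:ℝ) ^ (-ε) * ((n.choose 2).choose m : ℝ) with hX
    have hX0 : 0 ≤ X := by rw [hX]; positivity
    have hperj : ∀ j : ℕ, 16 * (j:ℝ) * (0.27:ℝ) ^ (j - 1) ≤ (32 / 0.54) * (0.54:ℝ) ^ j := by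
      intro j
      rcases Nat.eq_zero_or_pos j with rfl | hj1
      · norm_num
      · obtain ⟨p, rfl⟩ : ∃ p, j = p + 1 := ⟨j - 1, by omega⟩
        have hp2 : ((p:ℝ) + 1) ≤ 2 ^ (p + 1) := by
          have := Nat.lt_two_pow_self (n := p + 1)
          have h' : (p + 1 : ℕ) ≤ 2 ^ (p + 1) := this.le
          exact_mod_cast h'
        have hs : (p + 1) - 1 = p := by omega
        rw [hs]
        push_cast
        have h1 : 16 * ((p:ℝ) + 1) * (0.27:ℝ) ^ p ≤ 16 * (2 ^ (p+1)) * (0.27:ℝ) ^ p := by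
          apply mul_le_mul_of_nonneg_right _ (by positivity)
          apply mul_le_mul_of_nonneg_left hp2 (by norm_num)
        have h2 : 16 * ((2:ℝ) ^ (p+1)) * (0.27:ℝ) ^ p = (32 / 0.54) * (0.54:ℝ) ^ (p+1) := by
          have hmp : (2:ℝ) ^ p * (0.27:ℝ) ^ p = (0.54:ℝ) ^ p := by
            rw [← mul_pow]; norm_num
          rw [pow_succ, pow_succ, ← hmp]
          ring
        calc 16 * ((p:ℝ) + 1) * (0.27:ℝ) ^ p ≤ 16 * (2 ^ (p+1)) * (0.27:ℝ) ^ p := h1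
          _ = (32 / 0.54) * (0.54:ℝ) ^ (p+1) := h2
    have hgeom : ∑ j ∈ Finset.range (n + 1), (0.54:ℝ) ^ j ≤ 1 / 0.46 := by
      have hne : (0.54:ℝ) ≠ 1 := by norm_num
      rw [geom_sum_eq hne]
      have hpow : (0:ℝ) ≤ (0.54:ℝ) ^ (n + 1) := by positivity
      have heq : ((0.54:ℝ) ^ (n+1) - 1) / ((0.54:ℝ) - 1) = (1 - (0.54:ℝ) ^ (n+1)) / 0.46 := by
        ring
      rw [heq]
      rw [div_le_div_iff₀ (by norm_num) (by norm_num)]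
      nlinarith
    calc ∑ j ∈ Finset.range (n + 1),
          16 * (j:ℝ) * (0.27:ℝ) ^ (j - 1) * (n:ℝ) ^ (-ε) * ((n.choose 2).choose m : ℝ)
        ≤ ∑ j ∈ Finset.range (n + 1), (32 / 0.54) * (0.54:ℝ) ^ j * X := by
          apply Finset.sum_le_sum
          intro j _
          rw [hX, ← mul_assoc]
          apply mul_le_mul_of_nonneg_right _ (by positivity)
          apply mul_le_mul_of_nonneg_right (hperj j) (by positivity)
      _ = (32 / 0.54) * X * ∑ j ∈ Finset.range (n + 1), (0.54:ℝ) ^ j := by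
          rw [Finset.mul_sum]
          apply Finset.sum_congr rfl
          intros; ring
      _ ≤ (32 / 0.54) * X * (1 / 0.46) := by
          apply mul_le_mul_of_nonneg_left hgeom (by positivity)
      _ ≤ 130 * X := by nlinarith
      _ = 130 * (n:ℝ) ^ (-ε) * ((n.choose 2).choose m : ℝ) := by rw [hX]; ring
  have hδfin : 130 * (n:ℝ) ^ (-ε) * ((n.choose 2).choose m : ℝ)
      ≤ δ * ((n.choose 2).choose m : ℝ) := by
    apply mul_le_mul_of_nonneg_right (hN₀ n hnN₀) (by positivity)
  calc ((univ.filter P).card : ℝ)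
      ≤ ∑ j ∈ Finset.range (n + 1), ((n.choose j * g' j : ℕ) : ℝ) := hcast
    _ ≤ ∑ j ∈ Finset.range (n + 1),
          16 * (j:ℝ) * (0.27:ℝ) ^ (j - 1) * (n:ℝ) ^ (-ε) * ((n.choose 2).choose m : ℝ) :=
        Finset.sum_le_sum hterm
    _ ≤ 130 * (n:ℝ) ^ (-ε) * ((n.choose 2).choose m : ℝ) := hsum2
    _ ≤ δ * ((n.choose 2).choose m : ℝ) := hδfin

end TwwPaper
end
end

section
/- Fix α > 0 and let n ≤ m ≤ (1/11)·n·log n. If G is a uniformly random graph with vertex set [n] and m edges, then with probability tending to 1 as n → ∞, every set X ⊆ [n] with |X| ≥ αn + 1 satisfies e(G[X]) ≤ (1/10)·|X|·log|X|. -/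
noncomputable section

namespace TwwPaper

open Finset

variable {V : Type*}

/-! ### Auxiliary material for `statement_11` -/

section Aux11

open scoped Classical

set_option linter.unusedSectionVars false

-- Pure `Nat` inequality: `(a-k)^k * C(a-k, b-k) ≤ b^k * C(a,b)` for `k ≤ b ≤ a`.
private theorem aux_nat1 (a b : ℕ) (hb : b ≤ a) : ∀ k, k ≤ b →
    (a - k) ^ k * Nat.choose (a - k) (b - k) ≤ b ^ k * Nat.choose a b := by
  intro k
  induction k with
  | zero => simp
  | succ k ih =>
    intro hk
    have hk' : k ≤ b := Nat.le_of_succ_le hk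
    have hka : k < a := lt_of_lt_of_le hk hb
    have hid : (a - k) * Nat.choose (a - k - 1) (b - k - 1) =
        Nat.choose (a - k) (b - k) * (b - k) := by
      have h1 : a - k = (a - k - 1) + 1 := by omega
      have h2 : b - k = (b - k - 1) + 1 := by omega
      calc (a - k) * Nat.choose (a - k - 1) (b - k - 1)
          = ((a - k - 1) + 1) * Nat.choose (a - k - 1) (b - k - 1) := by rw [← h1]
        _ = Nat.choose ((a - k - 1) + 1) ((b - k - 1) + 1) * ((b - k - 1) + 1) :=
            Nat.add_one_mul_choose_eq _ _
        _ = Nat.choose (a - k) (b - k) * (b - k) := by rw [← h1, ← h2]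
    have e1 : a - (k+1) = a - k - 1 := by omega
    have e2 : b - (k+1) = b - k - 1 := by omega
    rw [e1, e2]
    calc (a - k - 1) ^ (k + 1) * Nat.choose (a - k - 1) (b - k - 1)
        = (a - k - 1) ^ k * ((a - k - 1) * Nat.choose (a - k - 1) (b - k - 1)) := by ring
      _ ≤ (a - k) ^ k * ((a - k) * Nat.choose (a - k - 1) (b - k - 1)) := by
          apply Nat.mul_le_mul
          · exact Nat.pow_le_pow_left (by omega) _
          · exact Nat.mul_le_mul_right _ (by omega)
      _ = (a - k) ^ k * (Nat.choose (a - k) (b - k) * (b - k)) := by rw [hid]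
      _ ≤ (a - k) ^ k * (Nat.choose (a - k) (b - k) * b) := by
          apply Nat.mul_le_mul_left
          exact Nat.mul_le_mul_left _ (by omega)
      _ = b * ((a - k) ^ k * Nat.choose (a - k) (b - k)) := by ring
      _ ≤ b * (b ^ k * Nat.choose a b) := Nat.mul_le_mul_left _ (ih hk')
      _ = b ^ (k+1) * Nat.choose a b := by ring

private theorem aux_nat2 (M t j : ℕ) :
    Nat.choose M j * (t + 1 - j) ^ j ≤ M ^ j * Nat.choose t j := by
  calc Nat.choose M j * (t + 1 - j) ^ j
      ≤ Nat.choose M j * Nat.descFactorial t j :=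
        Nat.mul_le_mul_left _ (Nat.pow_sub_le_descFactorial t j)
    _ = Nat.choose M j * (Nat.factorial j * Nat.choose t j) := by
        rw [Nat.descFactorial_eq_factorial_mul_choose]
    _ = (Nat.factorial j * Nat.choose M j) * Nat.choose t j := by ring
    _ = Nat.descFactorial M j * Nat.choose t j := by
        rw [Nat.descFactorial_eq_factorial_mul_choose]
    _ ≤ M ^ j * Nat.choose t j :=
        Nat.mul_le_mul_right _ (Nat.descFactorial_le_pow M j)

variable [Fintype V] [DecidableEq V]

/-- all potential edges -/
private noncomputable def allE (V : Type*) [Fintype V] : Finset (Sym2 V) :=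
  Finset.univ.filter (fun e => ¬ e.IsDiag)

/-- edges of `G` as a `Finset` -/
private noncomputable def eF (G : SimpleGraph V) : Finset (Sym2 V) :=
  Finset.univ.filter (fun e => e ∈ G.edgeSet)

/-- edges of `G` inside `X` -/
private noncomputable def inF (G : SimpleGraph V) (X : Finset V) : Finset (Sym2 V) :=
  Finset.univ.filter (fun e => e ∈ G.edgeSet ∧ ∀ v ∈ e, v ∈ X)

/-- potential edges inside `X` -/
private noncomputable def inAll (X : Finset V) : Finset (Sym2 V) :=
  (allE V).filter (fun e => ∀ v ∈ e, v ∈ X)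

private lemma edgeCount_eq (G : SimpleGraph V) : edgeCount G = (eF G).card := by
  rw [edgeCount, Nat.card_eq_fintype_card, eF, Fintype.card_subtype]

private lemma edgesIn_eq (G : SimpleGraph V) (X : Finset V) :
    edgesIn G X = (inF G X).card := by
  rw [edgesIn, Nat.card_eq_fintype_card, inF, Fintype.card_subtype]

private lemma inF_subset_eF (G : SimpleGraph V) (X : Finset V) : inF G X ⊆ eF G := by
  intro e he
  simp only [inF, Finset.mem_filter, Finset.mem_univ, true_and] at he
  simp only [eF, Finset.mem_filter, Finset.mem_univ, true_and]
  exact he.1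

private lemma eF_subset_allE (G : SimpleGraph V) : eF G ⊆ allE V := by
  intro e he
  simp only [eF, Finset.mem_filter, Finset.mem_univ, true_and] at he
  simp only [allE, Finset.mem_filter, Finset.mem_univ, true_and]
  exact SimpleGraph.not_isDiag_of_mem_edgeSet G he

private lemma inF_subset_inAll (G : SimpleGraph V) (X : Finset V) : inF G X ⊆ inAll X := by
  intro e he
  simp only [inF, Finset.mem_filter, Finset.mem_univ, true_and] at he
  simp only [inAll, allE, Finset.mem_filter, Finset.mem_univ, true_and]
  exact ⟨SimpleGraph.not_isDiag_of_mem_edgeSet G he.1, he.2⟩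

private lemma inAll_subset_sym2 (X : Finset V) : inAll X ⊆ X.sym2 := by
  intro e he
  simp only [inAll, allE, Finset.mem_filter, Finset.mem_univ, true_and] at he
  rw [Finset.mem_sym2_iff]
  exact he.2

private lemma inAll_subset_allE (X : Finset V) : inAll X ⊆ allE V :=
  Finset.filter_subset _ _

private lemma eF_inj : Function.Injective (eF (V := V)) := by
  intro G₁ G₂ h
  rw [← SimpleGraph.edgeSet_inj]
  ext e
  constructor <;> intro he
  · have : e ∈ eF G₁ := by simp [eF, he]
    rw [h] at this; simpa [eF] using this
  · have : e ∈ eF G₂ := by simp [eF, he]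
    rw [← h] at this; simpa [eF] using this

private lemma edgesIn_le_edgeCount (G : SimpleGraph V) (X : Finset V) :
    edgesIn G X ≤ edgeCount G := by
  rw [edgesIn_eq, edgeCount_eq]
  exact Finset.card_le_card (inF_subset_eF G X)

/-- total count lower bound -/
private lemma total_lower (m : ℕ) :
    ((allE V).card).choose m ≤ Nat.card {G : SimpleGraph V // edgeCount G = m} := by
  have key : ∀ s : Finset (Sym2 V), s ∈ (allE V).powersetCard m →
      (SimpleGraph.fromEdgeSet (↑s : Set (Sym2 V))).edgeSet = ↑s := by
    intro s hs
    rw [SimpleGraph.edgeSet_fromEdgeSet]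
    ext e
    simp only [Set.mem_diff, Set.mem_setOf_eq, and_iff_left_iff_imp]
    intro hes
    have hsub := (Finset.mem_powersetCard.mp hs).1 hes
    simp only [allE, Finset.mem_filter] at hsub
    exact hsub.2
  have key2 : ∀ s : Finset (Sym2 V), s ∈ (allE V).powersetCard m →
      edgeCount (SimpleGraph.fromEdgeSet (↑s : Set (Sym2 V))) = m := by
    intro s hs
    rw [edgeCount, key s hs, Nat.card_coe_set_eq, Set.ncard_coe_finset]
    exact (Finset.mem_powersetCard.mp hs).2
  rw [Nat.card_eq_fintype_card, ← Finset.card_powersetCard m (allE V), ← Fintype.card_coe]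
  refine Fintype.card_le_of_injective
    (fun s => ⟨SimpleGraph.fromEdgeSet ↑s.1, key2 s.1 s.2⟩) ?_
  intro s₁ s₂ h
  have h' : SimpleGraph.fromEdgeSet (↑s₁.1 : Set (Sym2 V)) = SimpleGraph.fromEdgeSet ↑s₂.1 :=
    congrArg Subtype.val h
  have : (↑s₁.1 : Set (Sym2 V)) = ↑s₂.1 := by
    rw [← key s₁.1 s₁.2, ← key s₂.1 s₂.2, h']
  exact Subtype.ext (Finset.coe_injective this)

/-- per-X double counting -/
private lemma perX (m t j : ℕ) (X : Finset V) :
    (Finset.univ.filter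
        (fun G : SimpleGraph V => edgeCount G = m ∧ t ≤ edgesIn G X)).card
      * Nat.choose t j
    ≤ Nat.choose (inAll X).card j * Nat.choose ((allE V).card - j) (m - j) := by
  set Bad := Finset.univ.filter
    (fun G : SimpleGraph V => edgeCount G = m ∧ t ≤ edgesIn G X) with hBad
  have h1 : Bad.card * Nat.choose t j ≤ (Bad.sigma fun G => (inF G X).powersetCard j).card := by
    rw [Finset.card_sigma]
    have hb : ∀ G ∈ Bad, Nat.choose t j ≤ ((inF G X).powersetCard j).card := by
      intro G hG
      rw [Finset.card_powersetCard]
      apply Nat.choose_le_choose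
      rw [hBad, Finset.mem_filter] at hG
      rw [← edgesIn_eq]
      exact hG.2.2
    have := Finset.card_nsmul_le_sum Bad _ _ hb
    simpa [smul_eq_mul] using this
  have h2 : (Bad.sigma fun G => (inF G X).powersetCard j).card ≤
      (((inAll X).powersetCard j).sigma
        (fun J => ((allE V) \ J).powersetCard (m - j))).card := by
    apply Finset.card_le_card_of_injOn
      (fun p => ⟨p.2, eF p.1 \ p.2⟩)
    · intro p hp
      rw [Finset.mem_coe, Finset.mem_sigma] at hp
      obtain ⟨hG, hJ⟩ := hp
      rw [hBad, Finset.mem_filter] at hG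
      rw [Finset.mem_powersetCard] at hJ
      have hJe : p.2 ⊆ eF p.1 := hJ.1.trans (inF_subset_eF _ _)
      rw [Finset.mem_coe, Finset.mem_sigma]
      constructor
      · rw [Finset.mem_powersetCard]
        exact ⟨hJ.1.trans (inF_subset_inAll _ _), hJ.2⟩
      · rw [Finset.mem_powersetCard]
        refine ⟨Finset.sdiff_subset_sdiff (eF_subset_allE _) (le_refl _), ?_⟩
        rw [Finset.card_sdiff_of_subset hJe, hJ.2, ← edgeCount_eq, hG.2.1]
    · intro p hp q hq hpq
      simp only [Sigma.mk.inj_iff, heq_eq_eq] at hpq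
      obtain ⟨hfst, hsnd⟩ := hpq
      simp only [Finset.mem_coe, Finset.mem_sigma] at hp hq
      have hpe : p.2 ⊆ eF p.1 :=
        (Finset.mem_powersetCard.mp hp.2).1.trans (inF_subset_eF _ _)
      have hqe : q.2 ⊆ eF q.1 :=
        (Finset.mem_powersetCard.mp hq.2).1.trans (inF_subset_eF _ _)
      have heF : eF p.1 = eF q.1 := by
        rw [← Finset.sdiff_union_of_subset hpe, ← Finset.sdiff_union_of_subset hqe,
          hsnd, hfst]
      have h1 : p.1 = q.1 := eF_inj heF
      exact Sigma.ext h1 (heq_of_eq (by rw [hfst]))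
  have h3 : (((inAll X).powersetCard j).sigma
        (fun J => ((allE V) \ J).powersetCard (m - j))).card
      = Nat.choose (inAll X).card j * Nat.choose ((allE V).card - j) (m - j) := by
    rw [Finset.card_sigma]
    have hc : ∀ J ∈ (inAll X).powersetCard j,
        (((allE V) \ J).powersetCard (m - j)).card
          = Nat.choose ((allE V).card - j) (m - j) := by
      intro J hJ
      rw [Finset.mem_powersetCard] at hJ
      rw [Finset.card_powersetCard,
        Finset.card_sdiff_of_subset (hJ.1.trans (inAll_subset_allE X)), hJ.2]
    rw [Finset.sum_congr rfl hc, Finset.sum_const, smul_eq_mul, Finset.card_powersetCard]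
  omega

end Aux11

section Aux11R

open Real Filter

private lemma aux_log2524 : (1/25 : ℝ) ≤ Real.log (25/24) := by
  have h := Real.add_one_le_exp (-(1/25) : ℝ)
  have h2 : (24/25 : ℝ) ≤ Real.exp (-(1/25)) := by linarith
  have h3 : Real.log (24/25 : ℝ) ≤ -(1/25) := by
    rw [← Real.log_exp (-(1/25))]
    exact Real.log_le_log (by norm_num) h2
  have h4 : Real.log (24/25 : ℝ) = - Real.log (25/24) := by
    rw [← Real.log_inv]; norm_num
  linarith [h4 ▸ h3]

private lemma aux_analytic (α : ℝ) (hα : 0 < α) (n s m t : ℕ) (M N : ℕ)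
    (h1 : α * n + 1 ≤ s) (h2 : s ≤ n)
    (ht : (s : ℝ) * Real.log s / 10 < t) (htm : t ≤ m)
    (hm : (m : ℝ) ≤ n * Real.log n / 11)
    (hM : (M : ℝ) ≤ s * (s + 1) / 2)
    (hN : (n : ℝ) * ((n : ℝ) - 1) / 2 ≤ N)
    (hL1 : 100 ≤ α * n)
    (hL2 : Real.log n ≤ (101 / 100) * (Real.log α + Real.log n))
    (hL3 : 1 / 2 + Real.log n / 11 ≤ (n : ℝ) / 200) :
    (M : ℝ) * m ≤ (24 / 25) * ((9 / 10) * t) * ((N : ℝ) - m) := by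
  have hs101 : (101 : ℝ) ≤ s := by linarith
  have hs0 : (0 : ℝ) < s := by linarith
  have hn101 : (101 : ℝ) ≤ n := le_trans hs101 (by exact_mod_cast Nat.cast_le.mpr h2)
  have hn0 : (0 : ℝ) < n := by linarith
  set a := Real.log s with ha
  set b := Real.log n with hb
  have hab : a ≤ b := Real.log_le_log hs0 (by exact_mod_cast h2)
  have ha1 : (1 : ℝ) ≤ a := by
    rw [ha, Real.le_log_iff_exp_le hs0]
    have := Real.exp_one_lt_d9
    have h9 : (2.7182818286:ℝ) ≤ 101 := by norm_num
    linarith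
  have hb0 : (0 : ℝ) < b := by linarith
  have hba : b ≤ (101 / 100) * a := by
    have hαn : (0:ℝ) < α * n := by positivity
    have hlog : Real.log α + Real.log n = Real.log (α * n) :=
      (Real.log_mul (ne_of_gt hα) (ne_of_gt hn0)).symm
    have h3 : Real.log (α * n) ≤ a := Real.log_le_log hαn (by linarith)
    calc b ≤ (101/100) * (Real.log α + Real.log n) := hL2
      _ = (101/100) * Real.log (α * n) := by rw [hlog]
      _ ≤ (101/100) * a := by linarith
  have k1 : (s : ℝ) * a ≤ 10 * m := by
    have : (s : ℝ) * a / 10 < m := lt_of_lt_of_le ht (by exact_mod_cast Nat.cast_le.mpr htm)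
    linarith
  have hm0 : (0 : ℝ) ≤ m := Nat.cast_nonneg m
  have ht0 : (s : ℝ) * a / 10 ≤ t := le_of_lt ht
  have hNm : (99 / 200) * (n : ℝ) ^ 2 ≤ (N : ℝ) - m := by
    have h4 : (m : ℝ) ≤ n * b / 11 := hm
    nlinarith [hL3, hn0, mul_le_mul_of_nonneg_left hL3 (le_of_lt hn0)]
  have key : (101 / 200) * s * m * a ≤ (1030301 / 24200000) * a ^ 2 * (n : ℝ) ^ 2 := by
    have e1 : (101 / 200) * s * m * a = (101 / 200) * ((s : ℝ) * a) * m := by ring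
    have e2 : (101 / 200) * ((s : ℝ) * a) * m ≤ (101 / 200) * (10 * m) * m := by
      apply mul_le_mul_of_nonneg_right _ hm0
      apply mul_le_mul_of_nonneg_left k1 (by norm_num)
    have e3 : (101 / 200) * (10 * (m:ℝ)) * m = (101 / 20) * m ^ 2 := by ring
    have e4 : (m : ℝ) ^ 2 ≤ ((n : ℝ) * b / 11) ^ 2 := pow_le_pow_left₀ hm0 hm 2
    have e5 : (b : ℝ) ^ 2 ≤ (101 / 100) ^ 2 * a ^ 2 := by
      have := pow_le_pow_left₀ hb0.le hba 2
      calc (b:ℝ)^2 ≤ ((101/100) * a)^2 := this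
        _ = (101/100)^2 * a^2 := by ring
    calc (101 / 200) * s * m * a ≤ (101 / 20) * (m:ℝ) ^ 2 := by rw [e1]; linarith
      _ ≤ (101 / 20) * ((n : ℝ) * b / 11) ^ 2 := by linarith
      _ = (101 / 2420) * (n : ℝ) ^ 2 * b ^ 2 := by ring
      _ ≤ (101 / 2420) * (n : ℝ) ^ 2 * ((101 / 100) ^ 2 * a ^ 2) := by
          apply mul_le_mul_of_nonneg_left e5 (by positivity)
      _ = (1030301 / 24200000) * a ^ 2 * (n : ℝ) ^ 2 := by ring
  have ha0 : (0 : ℝ) < a := by linarith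
  have key2 : (101 / 200) * s * m ≤ (1030301 / 24200000) * a * (n : ℝ) ^ 2 := by
    have h5 : ((101 / 200) * s * m) * a ≤ ((1030301 / 24200000) * a * (n : ℝ) ^ 2) * a := by
      calc ((101 / 200) * s * m) * a = (101 / 200) * s * m * a := by ring
        _ ≤ (1030301 / 24200000) * a ^ 2 * (n : ℝ) ^ 2 := key
        _ = ((1030301 / 24200000) * a * (n : ℝ) ^ 2) * a := by ring
    exact le_of_mul_le_mul_right h5 ha0
  have final1 : (M : ℝ) * m ≤ (101 / 200) * s ^ 2 * m := by
    have hs' : (s : ℝ) + 1 ≤ (101 / 100) * s := by linarith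
    have h6 : (M : ℝ) ≤ (101 / 200) * s ^ 2 := by
      calc (M:ℝ) ≤ s * (s + 1) / 2 := hM
        _ ≤ (s:ℝ) * ((101/100) * s) / 2 := by
            have := mul_le_mul_of_nonneg_left hs' hs0.le
            linarith
        _ = (101 / 200) * s ^ 2 := by ring
    apply mul_le_mul_of_nonneg_right h6 hm0
  have final2 : (101 / 200) * (s:ℝ) ^ 2 * m ≤ (1030301 / 24200000) * s * a * (n : ℝ) ^ 2 := by
    calc (101 / 200) * (s:ℝ) ^ 2 * m = (s:ℝ) * ((101 / 200) * s * m) := by ring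
      _ ≤ (s:ℝ) * ((1030301 / 24200000) * a * (n : ℝ) ^ 2) :=
          mul_le_mul_of_nonneg_left key2 (le_of_lt hs0)
      _ = (1030301 / 24200000) * s * a * (n : ℝ) ^ 2 := by ring
  have final3 : (1030301 / 24200000) * (s:ℝ) * a * (n : ℝ) ^ 2 ≤
      (24 / 25) * ((9 / 10) * t) * ((N : ℝ) - m) := by
    have hsa : (0:ℝ) ≤ s * a := by positivity
    calc (1030301 / 24200000) * (s:ℝ) * a * (n : ℝ) ^ 2
        ≤ (21384 / 500000) * (s:ℝ) * a * (n : ℝ) ^ 2 := by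
          have c0 : (0:ℝ) ≤ (s:ℝ) * a * (n:ℝ)^2 := by positivity
          have c1 : (1030301 / 24200000 : ℝ) ≤ 21384 / 500000 := by norm_num
          calc (1030301 / 24200000) * (s:ℝ) * a * (n : ℝ) ^ 2
              = (1030301 / 24200000) * ((s:ℝ) * a * (n:ℝ)^2) := by ring
            _ ≤ (21384 / 500000) * ((s:ℝ) * a * (n:ℝ)^2) := mul_le_mul_of_nonneg_right c1 c0
            _ = (21384 / 500000) * (s:ℝ) * a * (n : ℝ) ^ 2 := by ring
      _ = (24 / 25) * ((9 / 10) * ((s:ℝ) * a / 10)) * ((99 / 200) * (n:ℝ) ^ 2) := by ring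
      _ ≤ (24 / 25) * ((9 / 10) * t) * ((99 / 200) * (n:ℝ) ^ 2) := by
          apply mul_le_mul_of_nonneg_right _ (by positivity)
          apply mul_le_mul_of_nonneg_left _ (by norm_num)
          apply mul_le_mul_of_nonneg_left ht0 (by norm_num)
      _ ≤ (24 / 25) * ((9 / 10) * t) * ((N : ℝ) - m) := by
          apply mul_le_mul_of_nonneg_left hNm
          have ht1 : (0:ℝ) ≤ t := Nat.cast_nonneg t
          positivity
  linarith

private lemma aux_largeN (α δ : ℝ) (hα : 0 < α) (hδ : 0 < δ) :
    ∀ᶠ n : ℕ in atTop,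
      (100 ≤ α * n) ∧
      (Real.log n ≤ (101/100) * (Real.log α + Real.log n)) ∧
      (1/2 + Real.log n / 11 ≤ (n : ℝ) / 200) ∧
      ((2:ℝ) ^ (n:ℕ) * (24/25 : ℝ) ^ (α * n * Real.log n / 101 : ℝ) ≤ δ) ∧
      (1 ≤ n) := by
  have hcast : Tendsto (fun n : ℕ => (n : ℝ)) atTop atTop := tendsto_natCast_atTop_atTop
  have hlog : Tendsto (fun n : ℕ => Real.log n) atTop atTop :=
    Real.tendsto_log_atTop.comp hcast
  have h1 : ∀ᶠ n : ℕ in atTop, 100 ≤ α * n :=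
    (hcast.const_mul_atTop hα).eventually_ge_atTop 100
  have h2 : ∀ᶠ n : ℕ in atTop, Real.log n ≤ (101/100) * (Real.log α + Real.log n) := by
    filter_upwards [hlog.eventually_ge_atTop (-101 * Real.log α)] with n hn
    linarith
  have hlb : ∀ᶠ n : ℕ in atTop, Real.log n ≤ (1/2200) * n := by
    have hb := Real.isLittleO_log_id_atTop.bound (by norm_num : (0:ℝ) < 1/2200)
    have := hcast.eventually hb
    filter_upwards [this, eventually_ge_atTop 1] with n hn hn1
    have hn0 : (0:ℝ) ≤ (n:ℝ) := Nat.cast_nonneg n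
    have hln : |Real.log n| ≤ (1/2200) * |(n:ℝ)| := by simpa [Real.norm_eq_abs] using hn
    calc Real.log n ≤ |Real.log n| := le_abs_self _
      _ ≤ (1/2200) * |(n:ℝ)| := hln
      _ = (1/2200) * n := by rw [abs_of_nonneg hn0]
  have h3 : ∀ᶠ n : ℕ in atTop, 1/2 + Real.log n / 11 ≤ (n : ℝ) / 200 := by
    filter_upwards [hlb, eventually_ge_atTop 101] with n hn hn101
    have : (101 : ℝ) ≤ n := by exact_mod_cast hn101
    linarith
  have h4 : ∀ᶠ n : ℕ in atTop,
      (2:ℝ) ^ (n:ℕ) * (24/25 : ℝ) ^ (α * n * Real.log n / 101 : ℝ) ≤ δ := by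
    filter_upwards [hlog.eventually_ge_atTop (2525 * (Real.log 2 + 1) / α),
      hcast.eventually_ge_atTop (-Real.log δ), eventually_ge_atTop 1] with n hn hnd hn1
    have hn0 : (0:ℝ) < n := by exact_mod_cast hn1
    have hexp : (2:ℝ) ^ (n:ℕ) * (24/25 : ℝ) ^ (α * n * Real.log n / 101 : ℝ)
        = Real.exp ((n:ℝ) * Real.log 2 + (α * n * Real.log n / 101) * Real.log (24/25)) := by
      rw [Real.exp_add]
      congr 1
      · rw [← Real.rpow_natCast (2:ℝ) n, Real.rpow_def_of_pos (by norm_num)]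
        ring_nf
      · rw [Real.rpow_def_of_pos (by norm_num)]
        ring_nf
    rw [hexp]
    have hlog2425 : Real.log (24/25 : ℝ) ≤ -(1/25) := by
      have h4' : Real.log (24/25 : ℝ) = - Real.log (25/24) := by
        rw [← Real.log_inv]; norm_num
      linarith [aux_log2524]
    have hln0 : 0 ≤ Real.log n := by
      have : (1:ℝ) ≤ n := by exact_mod_cast hn1
      exact Real.log_nonneg this
    have key : (n:ℝ) * Real.log 2 + (α * n * Real.log n / 101) * Real.log (24/25)
        ≤ Real.log δ := by
      have s1 : (α * n * Real.log n / 101) * Real.log (24/25) ≤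
          (α * n * Real.log n / 101) * (-(1/25)) := by
        apply mul_le_mul_of_nonneg_left hlog2425
        positivity
      have s2 : α * Real.log n ≥ 2525 * (Real.log 2 + 1) := by
        have := mul_le_mul_of_nonneg_left hn (le_of_lt hα)
        calc (2525:ℝ) * (Real.log 2 + 1) = α * (2525 * (Real.log 2 + 1) / α) := by
              field_simp
          _ ≤ α * Real.log n := this
      have s3 : (n:ℝ) * Real.log 2 - α * n * Real.log n / 2525 ≤ -(n:ℝ) := by
        have : α * (Real.log n) * n ≥ 2525 * (Real.log 2 + 1) * n :=
          mul_le_mul_of_nonneg_right s2 hn0.le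
        nlinarith
      have s4 : -(n:ℝ) ≤ Real.log δ := by linarith
      calc (n:ℝ) * Real.log 2 + (α * n * Real.log n / 101) * Real.log (24/25)
          ≤ (n:ℝ) * Real.log 2 + (α * n * Real.log n / 101) * (-(1/25)) := by linarith
        _ = (n:ℝ) * Real.log 2 - α * n * Real.log n / 2525 := by ring
        _ ≤ -(n:ℝ) := s3
        _ ≤ Real.log δ := s4
    calc Real.exp ((n:ℝ) * Real.log 2 + (α * n * Real.log n / 101) * Real.log (24/25))
        ≤ Real.exp (Real.log δ) := Real.exp_le_exp.mpr key
      _ = δ := Real.exp_log hδ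
  filter_upwards [h1, h2, h3, h4, eventually_ge_atTop 1] with n a b c d e
  exact ⟨a, b, c, d, e⟩

end Aux11R


set_option maxHeartbeats 1600000 in
theorem statement_11 (α : ℝ) (hα : 0 < α) :
    ∀ δ : ℝ, 0 < δ → ∃ N : ℕ, ∀ n : ℕ, N ≤ n → ∀ m : ℕ,
      n ≤ m → (m : ℝ) ≤ (n : ℝ) * Real.log n / 11 →
      (Nat.card {G : SimpleGraph (Fin n) // edgeCount G = m ∧
          ¬ (∀ X : Finset (Fin n), α * n + 1 ≤ (X.card : ℝ) →
              (edgesIn G X : ℝ) ≤ (X.card : ℝ) * Real.log X.card / 10)} : ℝ) ≤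
        δ * Nat.card {G : SimpleGraph (Fin n) // edgeCount G = m} := by
  classical
  intro δ hδ
  obtain ⟨N₀, hN₀⟩ := Filter.eventually_atTop.mp (aux_largeN α δ hα hδ)
  refine ⟨N₀, ?_⟩
  intro n hn m hnm hm
  obtain ⟨hL1, hL2, hL3, hL4, hn1⟩ := hN₀ n hn
  have hn0 : (0:ℝ) < n := by exact_mod_cast hn1
  -- the number of potential edges
  have hNcval : (allE (Fin n)).card = n.choose 2 := by
    have h1 : Fintype.card {e : Sym2 (Fin n) // ¬ e.IsDiag} = (allE (Fin n)).card := by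
      apply Fintype.card_of_subtype
      intro x; simp [allE]
    rw [← h1, Sym2.card_subtype_not_diag, Fintype.card_fin]
  set Nc := (allE (Fin n)).card with hNcdef
  clear_value Nc
  have hNreal : (n:ℝ) * ((n:ℝ) - 1) / 2 ≤ Nc := by
    rw [hNcval, Nat.cast_choose_two]
  -- m is (strictly) smaller than Nc
  have hmNcR : (m:ℝ) < (n:ℝ) * ((n:ℝ) - 1) / 2 := by
    have h9 : Real.log n / 11 ≤ (n:ℝ)/200 - 1/2 := by linarith
    have h10 : (m:ℝ) ≤ (n:ℝ) * ((n:ℝ)/200 - 1/2) := by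
      calc (m:ℝ) ≤ (n:ℝ) * Real.log n / 11 := hm
        _ = (n:ℝ) * (Real.log n / 11) := by ring
        _ ≤ (n:ℝ) * ((n:ℝ)/200 - 1/2) := by
            apply mul_le_mul_of_nonneg_left h9 hn0.le
    have h11 : (1:ℝ) ≤ n := by exact_mod_cast hn1
    nlinarith
  have hmNc : m < Nc := by
    have : (m:ℝ) < (Nc:ℝ) := lt_of_lt_of_le hmNcR hNreal
    exact_mod_cast this
  have hmN : m ≤ Nc := le_of_lt hmNc
  -- the bad event, as a Finset
  have hbadcard : (Nat.card {G : SimpleGraph (Fin n) // edgeCount G = m ∧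
      ¬ (∀ X : Finset (Fin n), α * n + 1 ≤ (X.card : ℝ) →
          (edgesIn G X : ℝ) ≤ (X.card : ℝ) * Real.log X.card / 10)})
      = (Finset.univ.filter (fun G : SimpleGraph (Fin n) => edgeCount G = m ∧
      ¬ (∀ X : Finset (Fin n), α * n + 1 ≤ (X.card : ℝ) →
          (edgesIn G X : ℝ) ≤ (X.card : ℝ) * Real.log X.card / 10))).card := by
    rw [Nat.card_eq_fintype_card, Fintype.card_subtype]
  set tX : Finset (Fin n) → ℕ :=
    fun X => ⌊(X.card:ℝ) * Real.log X.card / 10⌋₊ + 1 with htXdef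
  set BadX : Finset (Fin n) → Finset (SimpleGraph (Fin n)) :=
    fun X => Finset.univ.filter
      (fun G : SimpleGraph (Fin n) => edgeCount G = m ∧ tX X ≤ edgesIn G X) with hBadXdef
  set GoodX := Finset.univ.filter
    (fun X : Finset (Fin n) => α * n + 1 ≤ (X.card:ℝ)) with hGoodXdef
  clear_value tX BadX GoodX
  -- union bound
  have hsub : Finset.univ.filter (fun G : SimpleGraph (Fin n) => edgeCount G = m ∧
      ¬ (∀ X : Finset (Fin n), α * n + 1 ≤ (X.card : ℝ) →
          (edgesIn G X : ℝ) ≤ (X.card : ℝ) * Real.log X.card / 10))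
      ⊆ GoodX.biUnion BadX := by
    intro G hG
    rw [Finset.mem_filter] at hG
    obtain ⟨-, hGm, hGbad⟩ := hG
    push_neg at hGbad
    obtain ⟨X, hX1, hX2⟩ := hGbad
    rw [Finset.mem_biUnion]
    refine ⟨X, ?_, ?_⟩
    · rw [hGoodXdef, Finset.mem_filter]
      exact ⟨Finset.mem_univ X, hX1⟩
    · rw [hBadXdef, Finset.mem_filter]
      refine ⟨Finset.mem_univ G, hGm, ?_⟩
      have h0 : (0:ℝ) ≤ (X.card:ℝ) * Real.log X.card / 10 := by
        have hc101 : (101:ℝ) ≤ X.card := by linarith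
        have hc1 : (1:ℝ) ≤ X.card := by linarith
        have := Real.log_nonneg hc1
        positivity
      have h12 : ⌊(X.card:ℝ) * Real.log X.card / 10⌋₊ < edgesIn G X :=
        (Nat.floor_lt h0).mpr hX2
      simp only [htXdef]
      omega
  -- per-X bound
  have hperX : ∀ X ∈ GoodX, ((BadX X).card : ℝ) ≤
      (24/25 : ℝ) ^ (α * n * Real.log n / 101 : ℝ) * (Nc.choose m : ℝ) := by
    intro X hX
    rcases Finset.eq_empty_or_nonempty (BadX X) with he | hne
    · rw [he]
      simp only [Finset.card_empty, Nat.cast_zero]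
      positivity
    · obtain ⟨G₀, hG₀⟩ := hne
      rw [hBadXdef, Finset.mem_filter] at hG₀
      obtain ⟨-, hG₀m, hG₀t⟩ := hG₀
      rw [hGoodXdef, Finset.mem_filter] at hX
      have hsα : α * n + 1 ≤ (X.card:ℝ) := hX.2
      set s := X.card with hsdef
      set t := tX X with htdef
      set j := t/10 + 1 with hjdef
      clear_value s t j
      have hsn : s ≤ n := by
        rw [hsdef]
        have h13 := Finset.card_le_univ X
        simpa [Finset.card_univ, Fintype.card_fin] using h13
      have ht1 : 1 ≤ t := by
        rw [htdef, htXdef]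
        exact Nat.succ_le_succ (Nat.zero_le _)
      have htm : t ≤ m := le_trans hG₀t (by rw [← hG₀m]; exact edgesIn_le_edgeCount G₀ X)
      have hjt : j ≤ t := by omega
      have hjm : j ≤ m := le_trans hjt htm
      have htreal : (s:ℝ) * Real.log s / 10 < t := by
        rw [htdef, htXdef, hsdef]
        push_cast
        exact Nat.lt_floor_add_one _
      set M := (inAll X).card with hMdef
      clear_value M
      have hMreal : (M:ℝ) ≤ (s:ℝ) * ((s:ℝ)+1) / 2 := by
        rw [hMdef, hsdef]
        have h7 : (inAll X).card ≤ X.sym2.card := Finset.card_le_card (inAll_subset_sym2 X)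
        rw [Finset.card_sym2] at h7
        have h7' : ((inAll X).card:ℝ) ≤ ((X.card+1).choose 2 : ℝ) := by exact_mod_cast h7
        rw [Nat.cast_choose_two] at h7'
        push_cast at h7'
        calc ((inAll X).card:ℝ) ≤ ((X.card:ℝ)+1) * ((X.card:ℝ)+1-1)/2 := h7'
          _ = (X.card:ℝ) * ((X.card:ℝ)+1)/2 := by ring
      have hAn := aux_analytic α hα n s m t M Nc hsα hsn htreal htm hm hMreal hNreal
        hL1 hL2 hL3
      -- the Nat chain
      have hcount : (BadX X).card * Nat.choose t j ≤
          Nat.choose M j * Nat.choose (Nc-j) (m-j) := by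
        rw [htdef, hMdef, hNcdef]
        simp only [hBadXdef]
        exact perX m (tX X) j X
      set A := t+1-j with hAdef
      set B := Nc-j with hBdef
      have step : ((BadX X).card * (A*B)^j) * Nat.choose t j ≤
          (((M*m)^j) * Nat.choose Nc m) * Nat.choose t j := by
        calc ((BadX X).card * (A*B)^j) * Nat.choose t j
            = ((BadX X).card * Nat.choose t j) * (A^j * B^j) := by
              rw [mul_pow]; ring
          _ ≤ (Nat.choose M j * Nat.choose (Nc-j) (m-j)) * (A^j * B^j) :=
              Nat.mul_le_mul_right _ hcount
          _ = (Nat.choose M j * A^j) * (B^j * Nat.choose (Nc-j) (m-j)) := by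
              ring
          _ ≤ (M^j * Nat.choose t j) * (m^j * Nat.choose Nc m) := by
              rw [hAdef, hBdef]
              exact Nat.mul_le_mul (aux_nat2 M t j) (aux_nat1 Nc m hmN j hjm)
          _ = (((M*m)^j) * Nat.choose Nc m) * Nat.choose t j := by
              rw [mul_pow]; ring
      have key_nat : (BadX X).card * (A*B)^j ≤ ((M*m)^j) * Nat.choose Nc m :=
        Nat.le_of_mul_le_mul_right step (Nat.choose_pos hjt)
      -- real casts
      clear_value A B
      have hD1 : ((9:ℝ)/10) * t ≤ (A:ℝ) := by
        have he1 : A = t - t/10 := by omega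
        rw [he1, Nat.cast_sub (Nat.div_le_self t 10)]
        have := Nat.cast_div_le (m := t) (n := 10) (α := ℝ)
        linarith
      have hD2 : (Nc:ℝ) - m ≤ (B:ℝ) := by
        rw [hBdef, Nat.cast_sub (le_trans hjm hmN)]
        have hjmr : (j:ℝ) ≤ m := by exact_mod_cast hjm
        linarith
      have hNcm0 : (0:ℝ) ≤ (Nc:ℝ) - m := by
        have : (m:ℝ) ≤ Nc := by exact_mod_cast hmN
        linarith
      have ht00 : (0:ℝ) ≤ ((9:ℝ)/10) * t := by positivity
      have hMm : (M:ℝ) * m ≤ (24/25) * ((A:ℝ) * (B:ℝ)) := by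
        calc (M:ℝ)*m ≤ (24/25) * (((9:ℝ)/10)*t) * ((Nc:ℝ)-m) := hAn
          _ ≤ (24/25) * (A:ℝ) * (B:ℝ) := by
              have b1 : (24/25 : ℝ) * (((9:ℝ)/10)*t) ≤ (24/25) * (A:ℝ) :=
                mul_le_mul_of_nonneg_left hD1 (by norm_num)
              have b2 : (0:ℝ) ≤ (24/25 : ℝ) * (((9:ℝ)/10)*t) := by positivity
              calc (24/25 : ℝ) * (((9:ℝ)/10)*t) * ((Nc:ℝ)-m)
                  ≤ (24/25 : ℝ) * (((9:ℝ)/10)*t) * (B:ℝ) :=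
                    mul_le_mul_of_nonneg_left hD2 b2
                _ ≤ (24/25) * (A:ℝ) * (B:ℝ) := by
                    apply mul_le_mul_of_nonneg_right b1 (Nat.cast_nonneg _)
          _ = (24/25) * ((A:ℝ) * (B:ℝ)) := by ring
      -- divide out
      have hDpos : (0:ℝ) < ((A:ℝ) * (B:ℝ))^j := by
        have e1 : 1 ≤ A := by omega
        have e2 : 1 ≤ B := by omega
        have e1' : (1:ℝ) ≤ (A:ℝ) := by exact_mod_cast e1
        have e2' : (1:ℝ) ≤ (B:ℝ) := by exact_mod_cast e2
        positivity
      have hBadreal : ((BadX X).card : ℝ) ≤ (24/25:ℝ)^j * (Nat.choose Nc m : ℝ) := by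
        have hc : ((BadX X).card : ℝ) * ((A:ℝ) * (B:ℝ))^j ≤
            ((M:ℝ)*(m:ℝ))^j * (Nat.choose Nc m : ℝ) := by
          exact_mod_cast key_nat
        have hpow : ((M:ℝ)*m)^j ≤ (24/25:ℝ)^j * ((A:ℝ) * (B:ℝ))^j := by
          have h0 : (0:ℝ) ≤ (M:ℝ)*m := by positivity
          have h16 := pow_le_pow_left₀ h0 hMm j
          calc ((M:ℝ)*m)^j ≤ ((24/25) * ((A:ℝ) * (B:ℝ)))^j := h16
            _ = (24/25:ℝ)^j * ((A:ℝ) * (B:ℝ))^j := mul_pow _ _ _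
        have hc2 : ((BadX X).card : ℝ) * ((A:ℝ) * (B:ℝ))^j ≤
            ((24/25:ℝ)^j * (Nat.choose Nc m : ℝ)) * ((A:ℝ) * (B:ℝ))^j := by
          calc ((BadX X).card : ℝ) * ((A:ℝ) * (B:ℝ))^j
              ≤ ((M:ℝ)*m)^j * (Nat.choose Nc m : ℝ) := hc
            _ ≤ ((24/25:ℝ)^j * ((A:ℝ) * (B:ℝ))^j) * (Nat.choose Nc m : ℝ) :=
                mul_le_mul_of_nonneg_right hpow (Nat.cast_nonneg _)
            _ = ((24/25:ℝ)^j * (Nat.choose Nc m : ℝ)) * ((A:ℝ) * (B:ℝ))^j := by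
                ring
        exact le_of_mul_le_mul_right hc2 hDpos
      -- exponent comparison
      have hjge : α * n * Real.log n / 101 ≤ (j:ℝ) := by
        -- j > t/10 ≥ s log s / 100 ≥ α n log n / 101
        have hj1 : (t:ℝ)/10 ≤ (j:ℝ) := by
          have hmod := Nat.div_add_mod t 10
          have hlt : t % 10 < 10 := Nat.mod_lt _ (by norm_num)
          have : (t:ℝ) < 10 * ((t/10 : ℕ):ℝ) + 10 := by
            have : t < 10 * (t/10) + 10 := by omega
            exact_mod_cast this
          have hjr : (j:ℝ) = ((t/10:ℕ):ℝ) + 1 := by rw [hjdef]; push_cast; ring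
          linarith
        have hsar : (s:ℝ) * Real.log s / 100 ≤ (t:ℝ)/10 := by linarith
        have hslog : α * n * ((100:ℝ)/101 * Real.log n) ≤ (s:ℝ) * Real.log s := by
          have hs101 : (101:ℝ) ≤ s := by linarith
          have hαn0 : (0:ℝ) < α * n := by positivity
          have hsaln : α * n ≤ (s:ℝ) := by linarith
          have hln : (100:ℝ)/101 * Real.log n ≤ Real.log s := by
            have hlogmul : Real.log α + Real.log n = Real.log (α * n) :=
              (Real.log_mul (ne_of_gt hα) (ne_of_gt hn0)).symm
            have h3 : Real.log (α * n) ≤ Real.log s :=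
              Real.log_le_log hαn0 (by linarith)
            linarith [hL2, hlogmul ▸ h3]
          have hln0 : (0:ℝ) ≤ (100:ℝ)/101 * Real.log n := by
            have := Real.log_nonneg (by exact_mod_cast hn1 : (1:ℝ) ≤ n)
            positivity
          exact mul_le_mul hsaln hln hln0 (Nat.cast_nonneg s)
        calc α * n * Real.log n / 101
            = (α * n * ((100:ℝ)/101 * Real.log n)) / 100 := by ring
          _ ≤ (s:ℝ) * Real.log s / 100 := by linarith
          _ ≤ (t:ℝ)/10 := hsar
          _ ≤ (j:ℝ) := hj1
      have hrpow : (24/25:ℝ)^j ≤ (24/25 : ℝ) ^ (α * n * Real.log n / 101 : ℝ) := by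
        rw [← Real.rpow_natCast (24/25:ℝ) j]
        exact Real.rpow_le_rpow_of_exponent_ge (by norm_num) (by norm_num) hjge
      calc ((BadX X).card : ℝ) ≤ (24/25:ℝ)^j * (Nat.choose Nc m : ℝ) := hBadreal
        _ ≤ (24/25 : ℝ) ^ (α * n * Real.log n / 101 : ℝ) * (Nat.choose Nc m : ℝ) :=
            mul_le_mul_of_nonneg_right hrpow (Nat.cast_nonneg _)
  -- put everything together
  have hGoodcard : (GoodX.card : ℝ) ≤ (2:ℝ)^n := by
    have h14 : GoodX.card ≤ 2^n := by
      have h15 := Finset.card_le_univ GoodX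
      simpa [Finset.card_univ, Fintype.card_finset, Fintype.card_fin] using h15
    calc (GoodX.card : ℝ) ≤ ((2^n : ℕ) : ℝ) := by exact_mod_cast h14
      _ = (2:ℝ)^n := by push_cast; ring
  have hsum : ((Finset.univ.filter (fun G : SimpleGraph (Fin n) => edgeCount G = m ∧
      ¬ (∀ X : Finset (Fin n), α * n + 1 ≤ (X.card : ℝ) →
          (edgesIn G X : ℝ) ≤ (X.card : ℝ) * Real.log X.card / 10))).card : ℝ)
      ≤ (2:ℝ)^n * ((24/25 : ℝ) ^ (α * n * Real.log n / 101 : ℝ) * (Nc.choose m : ℝ)) := by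
    have hb1 : (Finset.univ.filter (fun G : SimpleGraph (Fin n) => edgeCount G = m ∧
        ¬ (∀ X : Finset (Fin n), α * n + 1 ≤ (X.card : ℝ) →
            (edgesIn G X : ℝ) ≤ (X.card : ℝ) * Real.log X.card / 10))).card
        ≤ ∑ X ∈ GoodX, (BadX X).card :=
      le_trans (Finset.card_le_card hsub) (Finset.card_biUnion_le)
    have hb2 : ((∑ X ∈ GoodX, (BadX X).card : ℕ) : ℝ)
        = ∑ X ∈ GoodX, ((BadX X).card : ℝ) := by push_cast; rfl
    have hb3 : ∑ X ∈ GoodX, ((BadX X).card : ℝ)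
        ≤ GoodX.card • ((24/25 : ℝ) ^ (α * n * Real.log n / 101 : ℝ) * (Nc.choose m : ℝ)) :=
      Finset.sum_le_card_nsmul GoodX _ _ hperX
    have hbnd0 : (0:ℝ) ≤ (24/25 : ℝ) ^ (α * n * Real.log n / 101 : ℝ) * (Nc.choose m : ℝ) := by
      positivity
    calc ((Finset.univ.filter _).card : ℝ)
        ≤ ((∑ X ∈ GoodX, (BadX X).card : ℕ) : ℝ) := by exact_mod_cast hb1
      _ = ∑ X ∈ GoodX, ((BadX X).card : ℝ) := hb2
      _ ≤ GoodX.card • ((24/25 : ℝ) ^ (α * n * Real.log n / 101 : ℝ) * (Nc.choose m : ℝ)) := hb3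
      _ = (GoodX.card : ℝ) * ((24/25 : ℝ) ^ (α * n * Real.log n / 101 : ℝ) * (Nc.choose m : ℝ)) := by
          rw [nsmul_eq_mul]
      _ ≤ (2:ℝ)^n * ((24/25 : ℝ) ^ (α * n * Real.log n / 101 : ℝ) * (Nc.choose m : ℝ)) :=
          mul_le_mul_of_nonneg_right hGoodcard hbnd0
  have hfinal1 : (2:ℝ)^n * ((24/25 : ℝ) ^ (α * n * Real.log n / 101 : ℝ) * (Nc.choose m : ℝ))
      ≤ δ * (Nc.choose m : ℝ) := by
    calc (2:ℝ)^n * ((24/25 : ℝ) ^ (α * n * Real.log n / 101 : ℝ) * (Nc.choose m : ℝ))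
        = ((2:ℝ)^n * (24/25 : ℝ) ^ (α * n * Real.log n / 101 : ℝ)) * (Nc.choose m : ℝ) := by
          ring
      _ ≤ δ * (Nc.choose m : ℝ) := mul_le_mul_of_nonneg_right hL4 (Nat.cast_nonneg _)
  have hfinal2 : δ * (Nc.choose m : ℝ) ≤
      δ * (Nat.card {G : SimpleGraph (Fin n) // edgeCount G = m}) := by
    apply mul_le_mul_of_nonneg_left _ hδ.le
    rw [hNcdef]
    exact_mod_cast total_lower (V := Fin n) m
  rw [hbadcard]
  calc ((Finset.univ.filter _).card : ℝ)
      ≤ (2:ℝ)^n * ((24/25 : ℝ) ^ (α * n * Real.log n / 101 : ℝ) * (Nc.choose m : ℝ)) := hsum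
    _ ≤ δ * (Nc.choose m : ℝ) := hfinal1
    _ ≤ δ * (Nat.card {G : SimpleGraph (Fin n) // edgeCount G = m}) := hfinal2


end TwwPaper
end
end
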